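/- Bordered determinant identity: let R be a commutative ring, n ≥ 1, M an n×n matrix over R, b an n×1 column matrix, and c a 1×n row matrix. Then the determinant of the (n+1)×(n+1) block matrix [[M, b], [c, 0]] (formed with fromBlocks, the (n+1,n+1) entry being the 1×1 zero matrix) equals −(c * adjugate(M) * b), i.e., minus the unique entry of the 1×1 matrix c·adjugate(M)·b. -/

import Mathlib

open Matrix

lemma aux_dom {R : Type*} [CommRing R] [IsDomain R] {n : ℕ} (hn : 1 ≤ n)
    (M : Matrix (Fin n) (Fin n) R) (b : Matrix (Fin n) (Fin 1) R)
    (c : Matrix (Fin 1) (Fin n) R) (hM : M.det ≠ 0) :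
    (Matrix.fromBlocks M b c (0 : Matrix (Fin 1) (Fin 1) R)).det =
      -((c * M.adjugate * b) 0 0) := by
  have key : fromBlocks M b c (0 : Matrix (Fin 1) (Fin 1) R) *
      fromBlocks M.adjugate (-(M.adjugate * b)) 0 (M.det • (1 : Matrix (Fin 1) (Fin 1) R)) =
      fromBlocks (M.det • (1 : Matrix (Fin n) (Fin n) R)) 0 (c * M.adjugate)
        (-(c * M.adjugate * b)) := by
    rw [fromBlocks_multiply, Matrix.mul_zero, Matrix.zero_mul, Matrix.zero_mul, add_zero,
      add_zero, add_zero, mul_adjugate, Matrix.mul_neg, Matrix.mul_neg, Matrix.mul_smul,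
      Matrix.mul_one, ← Matrix.mul_assoc, ← Matrix.mul_assoc, mul_adjugate, Matrix.smul_mul,
      Matrix.one_mul, neg_add_cancel]
  have h1 := congrArg Matrix.det key
  rw [det_mul, det_fromBlocks_zero₂₁, det_fromBlocks_zero₁₂, det_adjugate, det_smul, det_smul,
    det_one, det_one, Fintype.card_fin, Fintype.card_fin] at h1
  have hpow : M.det ^ (n - 1) * (M.det ^ 1 * 1) = M.det ^ n := by
    rw [mul_one, ← pow_add, Nat.sub_add_cancel hn]
  rw [hpow] at h1
  have h2 : (fromBlocks M b c (0 : Matrix (Fin 1) (Fin 1) R)).det * M.det ^ n =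
      (-(c * M.adjugate * b) 0 0) * M.det ^ n := by
    rw [h1, det_fin_one, neg_apply]; ring
  have := mul_right_cancel₀ (pow_ne_zero n hM) h2
  rw [this]

/-- **bordered determinant identity.** For a commutative ring `R`, an
`n × n` matrix `M`, a column `b` and a row `c`, the determinant of the block matrix
`[[M, b], [c, 0]]` equals `-(c * adjugate(M) * b)`. -/
theorem stmt14 {R : Type*} [CommRing R] {n : ℕ} (hn : 1 ≤ n)
    (M : Matrix (Fin n) (Fin n) R) (b : Matrix (Fin n) (Fin 1) R)
    (c : Matrix (Fin 1) (Fin n) R) :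
    (Matrix.fromBlocks M b c (0 : Matrix (Fin 1) (Fin 1) R)).det =
      -((c * M.adjugate * b) 0 0) := by
  classical
  set σ := (Fin n × Fin n) ⊕ (Fin n × Fin 1) ⊕ (Fin 1 × Fin n) with hσ
  let M' : Matrix (Fin n) (Fin n) (MvPolynomial σ ℤ) :=
    fun i j => MvPolynomial.X (Sum.inl (i, j))
  let b' : Matrix (Fin n) (Fin 1) (MvPolynomial σ ℤ) :=
    fun i j => MvPolynomial.X (Sum.inr (Sum.inl (i, j)))
  let c' : Matrix (Fin 1) (Fin n) (MvPolynomial σ ℤ) :=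
    fun i j => MvPolynomial.X (Sum.inr (Sum.inr (i, j)))
  have hM' : M'.det ≠ 0 := by
    have hMeq : M' = (MvPolynomial.rename (Sum.inl : Fin n × Fin n → σ)).toRingHom.mapMatrix
        (mvPolynomialX (Fin n) (Fin n) ℤ) := by
      ext i j
      simp [M', mvPolynomialX_apply]
    rw [hMeq, ← RingHom.map_det]
    intro h
    exact det_mvPolynomialX_ne_zero (Fin n) ℤ
      ((MvPolynomial.rename_injective _ Sum.inl_injective) (by simpa using h))
  have key := aux_dom hn M' b' c' hM'
  let f : MvPolynomial σ ℤ →+* R := MvPolynomial.eval₂Hom (Int.castRingHom R)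
    (Sum.elim (fun p => M p.1 p.2) (Sum.elim (fun p => b p.1 p.2) (fun p => c p.1 p.2)))
  have hfM : M'.map f = M := by ext i j; show f (M' i j) = M i j; simp [M', f]
  have hfb : b'.map f = b := by ext i j; show f (b' i j) = b i j; simp [b', f]
  have hfc : c'.map f = c := by ext i j; show f (c' i j) = c i j; simp [c', f]
  have h := congrArg f key
  rw [RingHom.map_det, map_neg] at h
  have hblk : (RingHom.mapMatrix f) (fromBlocks M' b' c' 0) = fromBlocks M b c 0 := by
    show (fromBlocks M' b' c' 0).map f = _
    rw [fromBlocks_map, hfM, hfb, hfc]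
    congr 1
  have hrhs : f ((c' * M'.adjugate * b') 0 0) = (c * M.adjugate * b) 0 0 := by
    have : (c' * M'.adjugate * b').map f = c * M.adjugate * b := by
      rw [Matrix.map_mul, Matrix.map_mul, hfc, hfb]
      congr 1
      rw [show M'.adjugate.map f = (RingHom.mapMatrix f) M'.adjugate from rfl,
        RingHom.map_adjugate, show (RingHom.mapMatrix f) M' = M from hfM]
    calc f ((c' * M'.adjugate * b') 0 0) = ((c' * M'.adjugate * b').map f) 0 0 := rfl
      _ = (c * M.adjugate * b) 0 0 := by rw [this]
  rw [hblk, hrhs] at h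
  exact h
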